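/- Let q : Fin 4 × Fin 4 → ℝ be nonnegative with total sum 1 (representing the joint distribution of potential-outcome types (Y_{S=0}, Y_{S=1}, S_{T=0}, S_{T=1}) for a strong surrogate). Define ACE = q(2,2) + q(1,1) − q(1,2) − q(2,1) and γ = (q(0,1)+q(1,1)+q(2,1)+q(3,1)) − (q(0,2)+q(1,2)+q(2,2)+q(3,2)). Then ACE ≥ γ − (q(0,0)+q(0,1)+q(0,2)+q(0,3)+q(2,0)+q(2,1)+q(2,2)+q(2,3)) − (q(2,1)+q(2,3)+q(3,1)+q(3,3)), i.e., ACE(T→Y) ≥ ACE(S→Y) − P(S=0|T=1) − P(Y=1,S=1|T=0). -/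
import Mathlib

/- Strong-surrogate potential-outcome-type model: `q (i, j)` is the proportion of the
type with `(S_{T=0}, S_{T=1})` given by the binary expansion of `i` and
`(Y_{S=0}, Y_{S=1})` given by the binary expansion of `j`. -/

/-- `P(Y=0, S=0 | T=0)` -/
noncomputable def pA (q : Fin 4 × Fin 4 → ℝ) : ℝ := q (0, 0) + q (0, 1) + q (1, 0) + q (1, 1)

/-- `P(Y=1, S=0 | T=0)` -/
noncomputable def pB (q : Fin 4 × Fin 4 → ℝ) : ℝ := q (0, 2) + q (0, 3) + q (1, 2) + q (1, 3)

/-- `P(Y=0, S=1 | T=0)` -/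
noncomputable def pC (q : Fin 4 × Fin 4 → ℝ) : ℝ := q (2, 0) + q (2, 2) + q (3, 0) + q (3, 2)

/-- `P(Y=1, S=1 | T=0)` -/
noncomputable def pD (q : Fin 4 × Fin 4 → ℝ) : ℝ := q (2, 1) + q (2, 3) + q (3, 1) + q (3, 3)

/-- `P(S=0 | T=1)` -/
noncomputable def pE (q : Fin 4 × Fin 4 → ℝ) : ℝ :=
  q (0, 0) + q (0, 1) + q (0, 2) + q (0, 3) + q (2, 0) + q (2, 1) + q (2, 2) + q (2, 3)

/-- `γ = ACE(S → Y)` -/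
noncomputable def gam (q : Fin 4 × Fin 4 → ℝ) : ℝ :=
  (q (0, 1) + q (1, 1) + q (2, 1) + q (3, 1)) - (q (0, 2) + q (1, 2) + q (2, 2) + q (3, 2))

/-- `ACE(T → Y)` -/
noncomputable def ace (q : Fin 4 × Fin 4 → ℝ) : ℝ := q (2, 2) + q (1, 1) - q (1, 2) - q (2, 1)

theorem stmt0 (q : Fin 4 × Fin 4 → ℝ) (hq : ∀ p, 0 ≤ q p)
    (hsum : ∑ p : Fin 4 × Fin 4, q p = 1) :
    ace q ≥ gam q - pE q - pD q := by
  simp only [ace, gam, pE, pD]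
  linarith [hq (0,0), hq (0,1), hq (0,2), hq (0,3), hq (1,0), hq (1,1), hq (1,2), hq (1,3),
    hq (2,0), hq (2,1), hq (2,2), hq (2,3), hq (3,0), hq (3,1), hq (3,2), hq (3,3)]
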